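/- Let P be a broadcast protocol, F ⊆ Q a target set, and k ≥ 1. There exists a k-constrained initial execution of the reconfigurable broadcast network defined by P that visits a configuration in which at least one node is labelled by a state of F (coverability) if and only if there exists an unconstrained initial execution that visits such a configuration. -/

import Mathlib

/-!
Reconfigurable broadcast networks (Maubert–Pinchinat–Schlehuber-Caissier style
formalization of "Reconfiguration and message losses in parameterized broadcast networks").

A broadcast protocol is a tuple (Q, I, Σ, Δ); configurations are finite
Q-labelled simple graphs; steps are reconfiguration steps (labels unchanged,
edges arbitrary) or communication steps (edges unchanged, one node broadcasts,
its neighbours receive); executions strictly alternate the two kinds of steps.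
-/

namespace RBN

/-- An action of a broadcast protocol: broadcast `!!m` or reception `??m`. -/
inductive BAct (M : Type) where
  | brd : M → BAct M
  | rcv : M → BAct M

/-- A broadcast protocol `(Q, I, Σ, Δ)` with state space `Q` and message alphabet `M`:
initial states `init ⊆ Q` and transition relation `trans ⊆ Q × BAct M × Q`. -/
structure BroadcastProtocol (Q M : Type) where
  init : Set Q
  trans : Q → BAct M → Q → Prop

/-- A configuration: an undirected graph without self-loops on node set `V`,
whose nodes are labelled by states in `Q`. -/
structure Config (V Q : Type) where
  graph : SimpleGraph V
  label : V → Q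

/-- The distance `d(G, G')` between two configurations on the same node set with
the same labelling: the number of edges in the symmetric difference of the edge sets. -/
noncomputable def dist {V Q : Type} (G G' : Config V Q) : ℕ :=
  (symmDiff G.graph.edgeSet G'.graph.edgeSet).ncard

/-- The number of edges incident to node `v` in the symmetric difference of
the edge sets of `G` and `G'`. -/
noncomputable def localDist {V Q : Type} (v : V) (G G' : Config V Q) : ℕ :=
  {e ∈ symmDiff G.graph.edgeSet G'.graph.edgeSet | v ∈ e}.ncard

/-- A reconfiguration step: labels are unchanged and edges may change arbitrarily. -/
def ReconfStep {V Q : Type} (G G' : Config V Q) : Prop :=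
  G'.label = G.label

/-- A communication step: edges are unchanged, some node `v` broadcasts a message `m`
(performing a transition `(L v, !!m, L' v) ∈ Δ`), every neighbour `u` of `v` receives it
(performing `(L u, ??m, L' u) ∈ Δ`), and every other node keeps its label. -/
def CommStep {V Q M : Type} (P : BroadcastProtocol Q M) (G G' : Config V Q) : Prop :=
  G'.graph = G.graph ∧
  ∃ (v : V) (m : M),
    P.trans (G.label v) (.brd m) (G'.label v) ∧
    (∀ u, G.graph.Adj v u → P.trans (G.label u) (.rcv m) (G'.label u)) ∧
    (∀ u, u ≠ v → ¬ G.graph.Adj v u → G'.label u = G.label u)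

/-- The type of a step: communication or reconfiguration. -/
inductive StepType where
  | comm : StepType
  | reconf : StepType
deriving DecidableEq

/-- An execution of length `r` of the reconfigurable broadcast network defined by `P`,
with node set `V`: a sequence of configurations `cfg 0, …, cfg r` together with a
classification `ty` of each step, such that each step is of its declared kind and
communication and reconfiguration steps strictly alternate (reconfiguration steps
may be trivial). -/
structure Execution {Q M : Type} (V : Type) (P : BroadcastProtocol Q M) (r : ℕ) where
  cfg : ℕ → Config V Q
  ty : ℕ → StepType
  step_comm : ∀ i < r, ty i = .comm → CommStep P (cfg i) (cfg (i + 1))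
  step_reconf : ∀ i < r, ty i = .reconf → ReconfStep (cfg i) (cfg (i + 1))
  alternate : ∀ i, i + 1 < r → ty (i + 1) ≠ ty i

variable {Q M V : Type} {P : BroadcastProtocol Q M} {r : ℕ}

/-- An execution is initial if every node of its first configuration is labelled
by an initial state. -/
def Execution.Initial (ρ : Execution V P r) : Prop :=
  ∀ v, (ρ.cfg 0).label v ∈ P.init

/-- An execution synchronizes in `F` if every node of its last configuration is
labelled by a state in `F`. -/
def Execution.Synchronizes (ρ : Execution V P r) (F : Set Q) : Prop :=
  ∀ v, (ρ.cfg r).label v ∈ F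

/-- An execution is `k`-constrained if every reconfiguration step changes at most
`k` edges. -/
def Execution.KConstrained (k : ℕ) (ρ : Execution V P r) : Prop :=
  ∀ i < r, ρ.ty i = .reconf → dist (ρ.cfg i) (ρ.cfg (i + 1)) ≤ k

/-- An execution is strongly `k`-constrained if every reconfiguration step changes
exactly `k` edges. -/
def Execution.StronglyKConstrained (k : ℕ) (ρ : Execution V P r) : Prop :=
  ∀ i < r, ρ.ty i = .reconf → dist (ρ.cfg i) (ρ.cfg (i + 1)) = k

/-- An execution is `k`-locally-constrained if, at every step and for every node `v`,
at most `k` edges incident to `v` belong to the symmetric difference of the edge sets. -/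
def Execution.LocallyConstrained (k : ℕ) (ρ : Execution V P r) : Prop :=
  ∀ (v : V), ∀ i < r, localDist v (ρ.cfg i) (ρ.cfg (i + 1)) ≤ k

/-- An execution is `f`-constrained if every reconfiguration step changes at most
`f n` edges, where `n` is the number of nodes. -/
def Execution.FConstrained [Fintype V] (f : ℕ → ℕ) (ρ : Execution V P r) : Prop :=
  ∀ i < r, ρ.ty i = .reconf → dist (ρ.cfg i) (ρ.cfg (i + 1)) ≤ f (Fintype.card V)

/-- The number of communication steps of an execution. -/
def Execution.nbcomm (ρ : Execution V P r) : ℕ :=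
  ((Finset.range r).filter (fun i => ρ.ty i = StepType.comm)).card

/-- The total number of edge reconfigurations along an execution. -/
noncomputable def Execution.nbreconfig (ρ : Execution V P r) : ℕ :=
  ∑ i ∈ (Finset.range r).filter (fun i => ρ.ty i = StepType.reconf),
    dist (ρ.cfg i) (ρ.cfg (i + 1))

/-- An execution is `k`-balanced if it starts and ends with a communication step
and `nbreconfig ρ ≤ k * (nbcomm ρ - 1)`. -/
def Execution.Balanced (k : ℕ) (ρ : Execution V P r) : Prop :=
  1 ≤ r ∧ ρ.ty 0 = StepType.comm ∧ ρ.ty (r - 1) = StepType.comm ∧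
    ρ.nbreconfig ≤ k * (ρ.nbcomm - 1)

/-- Juxtaposition `G ⊕ H` of two configurations: disjoint union. -/
def Config.juxt {V W Q : Type} (G : Config V Q) (H : Config W Q) : Config (V ⊕ W) Q where
  graph := SimpleGraph.fromEdgeSet
    (Sym2.map Sum.inl '' G.graph.edgeSet ∪ Sym2.map Sum.inr '' H.graph.edgeSet)
  label := Sum.elim G.label H.label

/-- `G ^ N`: juxtaposition of `N` disjoint copies of `G`. -/
def Config.pow {V Q : Type} (G : Config V Q) (N : ℕ) : Config (V × Fin N) Q where
  graph := SimpleGraph.fromEdgeSet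
    (⋃ i : Fin N, Sym2.map (fun v => (v, i)) '' G.graph.edgeSet)
  label := fun p => G.label p.1

/-- Renaming the nodes of a configuration along a bijection. -/
def Config.rename {V W Q : Type} (e : V ≃ W) (G : Config V Q) : Config W Q where
  graph := SimpleGraph.comap e.symm G.graph
  label := G.label ∘ e.symm


/-! ### Auxiliary development for Statement 14 -/

section Aux

variable {Q M V W : Type} {P : BroadcastProtocol Q M}

/-- Abstract reachability of a state. -/
inductive Reach (P : BroadcastProtocol Q M) : Q → Prop
  | init : ∀ q ∈ P.init, Reach P q
  | brd : ∀ p p' a, Reach P p → P.trans p (.brd a) p' → Reach P p'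
  | rcv : ∀ q q' p p' a, Reach P q → P.trans q (.rcv a) q' →
      Reach P p → P.trans p (.brd a) p' → Reach P q'

/-- Soundness: every label occurring along an initial execution is abstractly reachable. -/
lemma reach_of_exec {r : ℕ} (ρ : Execution V P r) (hI : ρ.Initial) :
    ∀ i, i ≤ r → ∀ v, Reach P ((ρ.cfg i).label v) := by
  intro i
  induction i with
  | zero => intro _ v; exact Reach.init _ (hI v)
  | succ i ih =>
    intro hi v
    have hi' : i < r := by omega
    have ihv := ih (le_of_lt hi')
    cases hty : ρ.ty i with
    | comm =>
      obtain ⟨hg, b, m, hb, hrc, ho⟩ := ρ.step_comm i hi' hty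
      by_cases hv : v = b
      · subst hv; exact Reach.brd _ _ _ (ihv v) hb
      · by_cases ha : (ρ.cfg i).graph.Adj b v
        · exact Reach.rcv _ _ _ _ _ (ihv v) (hrc v ha) (ihv b) hb
        · rw [ho v hv ha]; exact ihv v
    | reconf =>
      have h := ρ.step_reconf i hi' hty
      rw [h]; exact ihv v

/-! #### Distance computations -/

lemma dist_of_graph_eq {G G' : Config V Q} (h : G.graph = G'.graph) : dist G G' = 0 := by
  unfold dist
  rw [h, symmDiff_self]
  rw [Set.bot_eq_empty]
  exact Set.ncard_empty _

lemma dist_comm (G G' : Config V Q) : dist G G' = dist G' G := by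
  unfold dist; rw [symmDiff_comm]

lemma dist_bot_single {u w : V} (h : u ≠ w) {G G' : Config V Q}
    (hG : G.graph = ⊥) (hG' : G'.graph = SimpleGraph.fromEdgeSet {s(u, w)}) :
    dist G G' ≤ 1 := by
  unfold dist
  rw [hG, hG', SimpleGraph.edgeSet_bot, SimpleGraph.edgeSet_fromEdgeSet]
  have hsub : symmDiff (∅ : Set (Sym2 V)) ({s(u, w)} \ {e : Sym2 V | e.IsDiag}) ⊆ {s(u, w)} := by
    intro x hx
    rw [Set.mem_symmDiff] at hx
    rcases hx with ⟨h1, _⟩ | ⟨h1, _⟩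
    · exact absurd h1 (Set.notMem_empty x)
    · exact h1.1
  exact le_trans (Set.ncard_le_ncard hsub (Set.finite_singleton _))
    (le_of_eq (Set.ncard_singleton _))

lemma single_adj {u w x y : V} (h : u ≠ w) :
    (SimpleGraph.fromEdgeSet {s(u, w)}).Adj x y ↔ (x = u ∧ y = w) ∨ (x = w ∧ y = u) := by
  rw [SimpleGraph.fromEdgeSet_adj]
  constructor
  · rintro ⟨hm, _⟩
    rw [Set.mem_singleton_iff, Sym2.eq_iff] at hm
    exact hm
  · rintro (⟨rfl, rfl⟩ | ⟨rfl, rfl⟩)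
    · exact ⟨Set.mem_singleton _, h⟩
    · exact ⟨by rw [Set.mem_singleton_iff]; exact Sym2.eq_swap, h.symm⟩

lemma edgeSet_map' (f : V ↪ W) (G : SimpleGraph V) :
    (G.map f).edgeSet = Sym2.map f '' G.edgeSet := by
  ext e
  induction e using Sym2.ind with
  | _ x y =>
    simp only [SimpleGraph.mem_edgeSet, SimpleGraph.map_adj, Set.mem_image]
    constructor
    · rintro ⟨a, b, hab, rfl, rfl⟩
      exact ⟨s(a, b), hab, rfl⟩
    · rintro ⟨e, he, hme⟩
      induction e using Sym2.ind with
      | _ a b =>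
        rw [Sym2.map_pair_eq, Sym2.eq_iff] at hme
        rcases hme with ⟨rfl, rfl⟩ | ⟨rfl, rfl⟩
        · exact ⟨a, b, he, rfl, rfl⟩
        · exact ⟨b, a, (SimpleGraph.adj_comm _ _ _).1 he, rfl, rfl⟩

/-! #### Sum of configurations -/

/-- Disjoint sum of two configurations (with `SimpleGraph.map`). -/
def cfgSum (G : Config V Q) (H : Config W Q) : Config (V ⊕ W) Q where
  graph := G.graph.map (⟨Sum.inl, Sum.inl_injective⟩ : V ↪ V ⊕ W) ⊔
    H.graph.map (⟨Sum.inr, Sum.inr_injective⟩ : W ↪ V ⊕ W)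
  label := Sum.elim G.label H.label

lemma cfgSum_adj {G : Config V Q} {H : Config W Q} {x y : V ⊕ W} :
    (cfgSum G H).graph.Adj x y ↔
      (∃ a b, x = Sum.inl a ∧ y = Sum.inl b ∧ G.graph.Adj a b) ∨
      (∃ a b, x = Sum.inr a ∧ y = Sum.inr b ∧ H.graph.Adj a b) := by
  simp only [cfgSum, SimpleGraph.sup_adj, SimpleGraph.map_adj, Function.Embedding.coeFn_mk]
  constructor
  · rintro (⟨-, a, b, hab, rfl, rfl⟩ | ⟨-, a, b, hab, rfl, rfl⟩)
    · exact Or.inl ⟨a, b, rfl, rfl, hab⟩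
    · exact Or.inr ⟨a, b, rfl, rfl, hab⟩
  · rintro (⟨a, b, rfl, rfl, hab⟩ | ⟨a, b, rfl, rfl, hab⟩)
    · exact Or.inl ⟨by simpa using hab.ne, a, b, hab, rfl, rfl⟩
    · exact Or.inr ⟨by simpa using hab.ne, a, b, hab, rfl, rfl⟩

lemma cfgSum_label (G : Config V Q) (H : Config W Q) :
    (cfgSum G H).label = Sum.elim G.label H.label := rfl

lemma cfgSum_graph_bot {G : Config V Q} {H : Config W Q}
    (hG : G.graph = ⊥) (hH : H.graph = ⊥) : (cfgSum G H).graph = ⊥ := by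
  ext x y
  rw [cfgSum_adj]
  simp [hG, hH]

lemma cfgSum_edgeSet (G : Config V Q) (H : Config W Q) :
    (cfgSum G H).graph.edgeSet =
      Sym2.map Sum.inl '' G.graph.edgeSet ∪ Sym2.map Sum.inr '' H.graph.edgeSet := by
  show (_ ⊔ _ : SimpleGraph _).edgeSet = _
  rw [SimpleGraph.edgeSet_sup, edgeSet_map', edgeSet_map']
  rfl

lemma dist_cfgSum_left [Finite V] [Finite W] (G G' : Config V Q) (H : Config W Q) :
    dist (cfgSum G H) (cfgSum G' H) ≤ dist G G' := by
  unfold dist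
  rw [cfgSum_edgeSet, cfgSum_edgeSet]
  have hinj : Function.Injective (Sym2.map (Sum.inl : V → V ⊕ W)) :=
    Sym2.map.injective Sum.inl_injective
  have hsub : symmDiff
      (Sym2.map Sum.inl '' G.graph.edgeSet ∪ Sym2.map Sum.inr '' H.graph.edgeSet)
      (Sym2.map Sum.inl '' G'.graph.edgeSet ∪ Sym2.map Sum.inr '' H.graph.edgeSet) ⊆
      Sym2.map Sum.inl '' symmDiff G.graph.edgeSet G'.graph.edgeSet := by
    rw [Set.image_symmDiff hinj]
    intro x hx
    rw [Set.mem_symmDiff] at hx ⊢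
    simp only [Set.mem_union] at hx
    tauto
  exact le_trans (Set.ncard_le_ncard hsub (Set.toFinite _))
    (le_of_eq (Set.ncard_image_of_injective _ hinj))

lemma dist_cfgSum_right [Finite V] [Finite W] (G : Config V Q) (H H' : Config W Q) :
    dist (cfgSum G H) (cfgSum G H') ≤ dist H H' := by
  unfold dist
  rw [cfgSum_edgeSet, cfgSum_edgeSet]
  have hinj : Function.Injective (Sym2.map (Sum.inr : W → V ⊕ W)) :=
    Sym2.map.injective Sum.inr_injective
  have hsub : symmDiff
      (Sym2.map Sum.inl '' G.graph.edgeSet ∪ Sym2.map Sum.inr '' H.graph.edgeSet)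
      (Sym2.map Sum.inl '' G.graph.edgeSet ∪ Sym2.map Sum.inr '' H'.graph.edgeSet) ⊆
      Sym2.map Sum.inr '' symmDiff H.graph.edgeSet H'.graph.edgeSet := by
    rw [Set.image_symmDiff hinj]
    intro x hx
    rw [Set.mem_symmDiff] at hx ⊢
    simp only [Set.mem_union] at hx
    tauto
  exact le_trans (Set.ncard_le_ncard hsub (Set.toFinite _))
    (le_of_eq (Set.ncard_image_of_injective _ hinj))

lemma CommStep.sum_left {G G' : Config V Q} (h : CommStep P G G') (H : Config W Q) :
    CommStep P (cfgSum G H) (cfgSum G' H) := by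
  obtain ⟨hg, v, m, hb, hrc, ho⟩ := h
  refine ⟨?_, Sum.inl v, m, hb, ?_, ?_⟩
  · show (_ ⊔ _ : SimpleGraph _) = _ ⊔ _
    rw [hg]
  · intro u hadj
    rw [cfgSum_adj] at hadj
    rcases hadj with ⟨a, b, ha, rfl, hab⟩ | ⟨a, b, ha, rfl, hab⟩
    · have hav : a = v := Sum.inl_injective ha.symm
      subst hav
      exact hrc b hab
    · exact absurd ha (by simp)
  · intro u hne hnadj
    cases u with
    | inl b =>
      have hbv : b ≠ v := by rintro rfl; exact hne rfl
      have hnadj' : ¬ G.graph.Adj v b := fun h' =>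
        hnadj (cfgSum_adj.mpr (Or.inl ⟨v, b, rfl, rfl, h'⟩))
      exact ho b hbv hnadj'
    | inr b => rfl

lemma CommStep.sum_right {H H' : Config W Q} (h : CommStep P H H') (G : Config V Q) :
    CommStep P (cfgSum G H) (cfgSum G H') := by
  obtain ⟨hg, v, m, hb, hrc, ho⟩ := h
  refine ⟨?_, Sum.inr v, m, hb, ?_, ?_⟩
  · show (_ ⊔ _ : SimpleGraph _) = _ ⊔ _
    rw [hg]
  · intro u hadj
    rw [cfgSum_adj] at hadj
    rcases hadj with ⟨a, b, ha, rfl, hab⟩ | ⟨a, b, ha, rfl, hab⟩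
    · exact absurd ha (by simp)
    · have hav : a = v := Sum.inr_injective ha.symm
      subst hav
      exact hrc b hab
  · intro u hne hnadj
    cases u with
    | inl b => rfl
    | inr b =>
      have hbv : b ≠ v := by rintro rfl; exact hne rfl
      have hnadj' : ¬ H.graph.Adj v b := fun h' =>
        hnadj (cfgSum_adj.mpr (Or.inr ⟨v, b, rfl, rfl, h'⟩))
      exact ho b hbv hnadj'

lemma ReconfStep.sum {G G' : Config V Q} {H H' : Config W Q}
    (h : ReconfStep G G') (h' : ReconfStep H H') : ReconfStep (cfgSum G H) (cfgSum G' H') := by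
  unfold ReconfStep at *
  rw [cfgSum_label, cfgSum_label, h, h']

/-! #### Appending a reconfiguration step followed by a communication step -/

/-- Append a reconfiguration step to `G1` followed by a communication step to `G2`. -/
def Execution.snoc2 {r : ℕ} (ρ : Execution V P r) (G1 G2 : Config V Q)
    (h1 : ReconfStep (ρ.cfg r) G1) (h2 : CommStep P G1 G2)
    (hend : r = 0 ∨ ρ.ty (r - 1) = StepType.comm) : Execution V P (r + 2) where
  cfg i := if i ≤ r then ρ.cfg i else if i = r + 1 then G1 else G2
  ty i := if i < r then ρ.ty i else if i = r then .reconf else .comm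
  step_comm := by
    intro i hi hty
    rcases lt_trichotomy i r with h | rfl | h
    · rw [if_pos h] at hty
      rw [if_pos (by omega : i ≤ r), if_pos (by omega : i + 1 ≤ r)]
      exact ρ.step_comm i h hty
    · rw [if_neg (by omega), if_pos rfl] at hty
      exact absurd hty (by simp)
    · have hieq : i = r + 1 := by omega
      subst hieq
      rw [if_neg (by omega), if_pos rfl, if_neg (by omega), if_neg (by omega)]
      exact h2
  step_reconf := by
    intro i hi hty
    rcases lt_trichotomy i r with h | rfl | h
    · rw [if_pos h] at hty
      rw [if_pos (by omega : i ≤ r), if_pos (by omega : i + 1 ≤ r)]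
      exact ρ.step_reconf i h hty
    · rw [if_pos (le_refl _), if_neg (by omega), if_pos rfl]
      exact h1
    · have hieq : i = r + 1 := by omega
      rw [if_neg (by omega), if_neg (by omega)] at hty
      exact absurd hty (by simp)
  alternate := by
    intro i hi
    rcases lt_trichotomy (i + 1) r with h | h | h
    · rw [if_pos h, if_pos (by omega)]
      exact ρ.alternate i h
    · have hr0 : r ≠ 0 := by omega
      rcases hend with h0 | hend
      · exact absurd h0 hr0
      rw [if_neg (by omega), if_pos (by omega), if_pos (by omega),
        (by omega : i = r - 1)]
      rw [hend]
      simp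
    · have hieq : i = r := by omega
      subst hieq
      rw [if_neg (by omega), if_neg (by omega), if_neg (by omega), if_pos rfl]
      simp
  -- note: in the middle `alternate` case, `ty (i+1) = reconf`, `ty i = ρ.ty (r-1) = comm`

lemma Execution.snoc2_cfg_le {r : ℕ} {ρ : Execution V P r} {G1 G2 : Config V Q}
    {h1 : ReconfStep (ρ.cfg r) G1} {h2 : CommStep P G1 G2}
    {hend : r = 0 ∨ ρ.ty (r - 1) = StepType.comm} {i : ℕ} (h : i ≤ r) :
    (ρ.snoc2 G1 G2 h1 h2 hend).cfg i = ρ.cfg i := if_pos h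

lemma Execution.snoc2_cfg_succ {r : ℕ} {ρ : Execution V P r} {G1 G2 : Config V Q}
    {h1 : ReconfStep (ρ.cfg r) G1} {h2 : CommStep P G1 G2}
    {hend : r = 0 ∨ ρ.ty (r - 1) = StepType.comm} :
    (ρ.snoc2 G1 G2 h1 h2 hend).cfg (r + 1) = G1 := by
  show (if r + 1 ≤ r then _ else _) = G1
  rw [if_neg (by omega), if_pos rfl]

lemma Execution.snoc2_cfg_top {r : ℕ} {ρ : Execution V P r} {G1 G2 : Config V Q}
    {h1 : ReconfStep (ρ.cfg r) G1} {h2 : CommStep P G1 G2}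
    {hend : r = 0 ∨ ρ.ty (r - 1) = StepType.comm} :
    (ρ.snoc2 G1 G2 h1 h2 hend).cfg (r + 2) = G2 := by
  show (if r + 2 ≤ r then _ else _) = G2
  rw [if_neg (by omega), if_neg (by omega)]

lemma Execution.snoc2_ty_lt {r : ℕ} {ρ : Execution V P r} {G1 G2 : Config V Q}
    {h1 : ReconfStep (ρ.cfg r) G1} {h2 : CommStep P G1 G2}
    {hend : r = 0 ∨ ρ.ty (r - 1) = StepType.comm} {i : ℕ} (h : i < r) :
    (ρ.snoc2 G1 G2 h1 h2 hend).ty i = ρ.ty i := if_pos h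

lemma Execution.snoc2_ty_r {r : ℕ} {ρ : Execution V P r} {G1 G2 : Config V Q}
    {h1 : ReconfStep (ρ.cfg r) G1} {h2 : CommStep P G1 G2}
    {hend : r = 0 ∨ ρ.ty (r - 1) = StepType.comm} :
    (ρ.snoc2 G1 G2 h1 h2 hend).ty r = StepType.reconf := by
  show (if r < r then _ else _) = _
  rw [if_neg (by omega), if_pos rfl]

lemma Execution.snoc2_ty_succ {r : ℕ} {ρ : Execution V P r} {G1 G2 : Config V Q}
    {h1 : ReconfStep (ρ.cfg r) G1} {h2 : CommStep P G1 G2}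
    {hend : r = 0 ∨ ρ.ty (r - 1) = StepType.comm} :
    (ρ.snoc2 G1 G2 h1 h2 hend).ty (r + 1) = StepType.comm := by
  show (if r + 1 < r then _ else _) = _
  rw [if_neg (by omega), if_neg (by omega)]

/-! #### Juxtaposition of executions -/

/-- Run `ρ1` on the left component, then `ρ2` on the right component. -/
def Execution.juxtE {r1 r2 : ℕ} (ρ1 : Execution V P r1) (ρ2 : Execution W P r2)
    (h1end : r1 = 0 ∨ ρ1.ty (r1 - 1) = StepType.comm)
    (h2start : r2 = 0 ∨ ρ2.ty 0 = StepType.reconf) :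
    Execution (V ⊕ W) P (r1 + r2) where
  cfg i := cfgSum (ρ1.cfg (min i r1)) (ρ2.cfg (i - r1))
  ty i := if i < r1 then ρ1.ty i else ρ2.ty (i - r1)
  step_comm := by
    intro i hi hty
    by_cases h : i < r1
    · rw [if_pos h] at hty
      rw [(by omega : min i r1 = i), (by omega : i - r1 = 0),
        (by omega : min (i + 1) r1 = i + 1), (by omega : i + 1 - r1 = 0)]
      exact (ρ1.step_comm i h hty).sum_left _
    · rw [if_neg h] at hty
      have hj : i - r1 < r2 := by omega
      rw [(by omega : min i r1 = r1), (by omega : min (i + 1) r1 = r1),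
        (by omega : i + 1 - r1 = (i - r1) + 1)]
      exact (ρ2.step_comm (i - r1) hj hty).sum_right _
  step_reconf := by
    intro i hi hty
    by_cases h : i < r1
    · rw [if_pos h] at hty
      rw [(by omega : min i r1 = i), (by omega : i - r1 = 0),
        (by omega : min (i + 1) r1 = i + 1), (by omega : i + 1 - r1 = 0)]
      exact (ρ1.step_reconf i h hty).sum rfl
    · rw [if_neg h] at hty
      have hj : i - r1 < r2 := by omega
      rw [(by omega : min i r1 = r1), (by omega : min (i + 1) r1 = r1),
        (by omega : i + 1 - r1 = (i - r1) + 1)]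
      exact ReconfStep.sum rfl (ρ2.step_reconf (i - r1) hj hty)
  alternate := by
    intro i hi
    rcases lt_trichotomy (i + 1) r1 with h | h | h
    · rw [if_pos h, if_pos (by omega)]
      exact ρ1.alternate i (by omega)
    · have hr1 : r1 ≠ 0 := by omega
      have hr2 : r2 ≠ 0 := by omega
      rcases h1end with h0 | h1end
      · exact absurd h0 hr1
      rcases h2start with h0 | h2start
      · exact absurd h0 hr2
      rw [if_neg (by omega), if_pos (by omega), (by omega : i + 1 - r1 = 0),
        (by omega : i = r1 - 1), h1end, h2start]
      simp
    · by_cases h' : i < r1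
      · have : i + 1 = r1 := by omega
        omega
      · rw [if_neg (by omega), if_neg h',
          (by omega : i + 1 - r1 = (i - r1) + 1)]
        exact ρ2.alternate (i - r1) (by omega)

lemma Execution.juxtE_cfg {r1 r2 : ℕ} {ρ1 : Execution V P r1} {ρ2 : Execution W P r2}
    {h1end : r1 = 0 ∨ ρ1.ty (r1 - 1) = StepType.comm}
    {h2start : r2 = 0 ∨ ρ2.ty 0 = StepType.reconf} (i : ℕ) :
    (ρ1.juxtE ρ2 h1end h2start).cfg i = cfgSum (ρ1.cfg (min i r1)) (ρ2.cfg (i - r1)) := rfl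

lemma Execution.juxtE_ty {r1 r2 : ℕ} {ρ1 : Execution V P r1} {ρ2 : Execution W P r2}
    {h1end : r1 = 0 ∨ ρ1.ty (r1 - 1) = StepType.comm}
    {h2start : r2 = 0 ∨ ρ2.ty 0 = StepType.reconf} (i : ℕ) :
    (ρ1.juxtE ρ2 h1end h2start).ty i = if i < r1 then ρ1.ty i else ρ2.ty (i - r1) := rfl

lemma juxtE_props [Finite V] [Finite W] {r1 r2 : ℕ}
    (ρ1 : Execution V P r1) (ρ2 : Execution W P r2)
    (h1end : r1 = 0 ∨ ρ1.ty (r1 - 1) = StepType.comm)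
    (h2start : r2 = 0 ∨ ρ2.ty 0 = StepType.reconf)
    (h2end : r2 = 0 ∨ ρ2.ty (r2 - 1) = StepType.comm)
    (h1start : r1 = 0 ∨ ρ1.ty 0 = StepType.reconf)
    (hI1 : ρ1.Initial) (hI2 : ρ2.Initial)
    (hd1 : ∀ i < r1, dist (ρ1.cfg i) (ρ1.cfg (i + 1)) ≤ 1)
    (hd2 : ∀ i < r2, dist (ρ2.cfg i) (ρ2.cfg (i + 1)) ≤ 1)
    (h01 : (ρ1.cfg 0).graph = ⊥) (he1 : (ρ1.cfg r1).graph = ⊥)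
    (h02 : (ρ2.cfg 0).graph = ⊥) (he2 : (ρ2.cfg r2).graph = ⊥) :
    (ρ1.juxtE ρ2 h1end h2start).Initial ∧
    (∀ i < r1 + r2, dist ((ρ1.juxtE ρ2 h1end h2start).cfg i)
        ((ρ1.juxtE ρ2 h1end h2start).cfg (i + 1)) ≤ 1) ∧
    (r1 + r2 = 0 ∨ (ρ1.juxtE ρ2 h1end h2start).ty (r1 + r2 - 1) = StepType.comm) ∧
    (r1 + r2 = 0 ∨ (ρ1.juxtE ρ2 h1end h2start).ty 0 = StepType.reconf) ∧
    ((ρ1.juxtE ρ2 h1end h2start).cfg 0).graph = ⊥ ∧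
    ((ρ1.juxtE ρ2 h1end h2start).cfg (r1 + r2)).graph = ⊥ ∧
    ((ρ1.juxtE ρ2 h1end h2start).cfg (r1 + r2)).label =
      Sum.elim ((ρ1.cfg r1).label) ((ρ2.cfg r2).label) := by
  refine ⟨?_, ?_, ?_, ?_, ?_, ?_, ?_⟩
  · intro x
    rw [Execution.juxtE_cfg, (by omega : min 0 r1 = 0), (by omega : 0 - r1 = 0)]
    cases x with
    | inl a => exact hI1 a
    | inr b => exact hI2 b
  · intro i hi
    by_cases h : i < r1
    · rw [Execution.juxtE_cfg, Execution.juxtE_cfg, (by omega : min i r1 = i),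
        (by omega : i - r1 = 0), (by omega : min (i + 1) r1 = i + 1),
        (by omega : i + 1 - r1 = 0)]
      exact le_trans (dist_cfgSum_left _ _ _) (hd1 i h)
    · rw [Execution.juxtE_cfg, Execution.juxtE_cfg, (by omega : min i r1 = r1),
        (by omega : min (i + 1) r1 = r1), (by omega : i + 1 - r1 = (i - r1) + 1)]
      exact le_trans (dist_cfgSum_right _ _ _) (hd2 (i - r1) (by omega))
  · by_cases h : r1 + r2 = 0
    · exact Or.inl h
    · refine Or.inr ?_
      rw [Execution.juxtE_ty]
      by_cases h2 : r2 = 0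
      · rcases h1end with h0 | h1end
        · omega
        · rw [if_pos (by omega), (by omega : r1 + r2 - 1 = r1 - 1)]
          exact h1end
      · rcases h2end with h0 | h2end
        · omega
        · rw [if_neg (by omega), (by omega : r1 + r2 - 1 - r1 = r2 - 1)]
          exact h2end
  · by_cases h : r1 + r2 = 0
    · exact Or.inl h
    · refine Or.inr ?_
      rw [Execution.juxtE_ty]
      by_cases h1 : r1 = 0
      · rcases h2start with h0 | h2start
        · omega
        · rw [if_neg (by omega), (by omega : 0 - r1 = 0)]
          exact h2start
      · rcases h1start with h0 | h1start
        · omega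
        · rw [if_pos (by omega)]
          exact h1start
  · rw [Execution.juxtE_cfg, (by omega : min 0 r1 = 0), (by omega : 0 - r1 = 0)]
    exact cfgSum_graph_bot h01 h02
  · rw [Execution.juxtE_cfg, (by omega : min (r1 + r2) r1 = r1),
      (by omega : r1 + r2 - r1 = r2)]
    exact cfgSum_graph_bot he1 he2
  · rw [Execution.juxtE_cfg, (by omega : min (r1 + r2) r1 = r1),
      (by omega : r1 + r2 - r1 = r2)]
    rfl

/-! #### Renaming executions along a bijection -/

/-- Renaming a configuration along a bijection, using `SimpleGraph.map`. -/
def Config.mapEquiv (e : V ≃ W) (G : Config V Q) : Config W Q :=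
  ⟨G.graph.map e.toEmbedding, G.label ∘ e.symm⟩

lemma mapEquiv_adj (e : V ≃ W) (G : Config V Q) (x y : W) :
    (Config.mapEquiv e G).graph.Adj x y ↔ G.graph.Adj (e.symm x) (e.symm y) := by
  simp only [Config.mapEquiv, SimpleGraph.map_adj, Equiv.toEmbedding_apply]
  constructor
  · rintro ⟨a, b, hab, rfl, rfl⟩
    simpa using hab
  · intro h
    exact ⟨e.symm x, e.symm y, h, by simp, by simp⟩

lemma dist_mapEquiv (e : V ≃ W) (G G' : Config V Q) :
    dist (Config.mapEquiv e G) (Config.mapEquiv e G') = dist G G' := by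
  unfold dist Config.mapEquiv
  have hinj : Function.Injective (Sym2.map (⇑e)) := Sym2.map.injective e.injective
  show (symmDiff ((SimpleGraph.map _ _).edgeSet) ((SimpleGraph.map _ _).edgeSet)).ncard = _
  rw [edgeSet_map', edgeSet_map']
  simp only [Equiv.coe_toEmbedding]
  rw [← Set.image_symmDiff hinj]
  exact Set.ncard_image_of_injective _ hinj

/-- Renaming an execution along a bijection. -/
def Execution.renameE {r : ℕ} (ρ : Execution V P r) (e : V ≃ W) : Execution W P r where
  cfg i := Config.mapEquiv e (ρ.cfg i)
  ty := ρ.ty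
  step_comm := by
    intro i hi h
    obtain ⟨hg, v, m, hb, hrc, ho⟩ := ρ.step_comm i hi h
    refine ⟨?_, e v, m, ?_, ?_, ?_⟩
    · show (ρ.cfg (i + 1)).graph.map _ = (ρ.cfg i).graph.map _
      rw [hg]
    · show P.trans ((ρ.cfg i).label (e.symm (e v))) _ ((ρ.cfg (i + 1)).label (e.symm (e v)))
      rw [Equiv.symm_apply_apply]
      exact hb
    · intro x hadj
      rw [mapEquiv_adj, Equiv.symm_apply_apply] at hadj
      exact hrc (e.symm x) hadj
    · intro x hne hnadj
      show (ρ.cfg (i + 1)).label (e.symm x) = (ρ.cfg i).label (e.symm x)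
      refine ho (e.symm x) ?_ ?_
      · intro hh
        apply hne
        rw [← hh]
        simp
      · intro hadj
        exact hnadj ((mapEquiv_adj e (ρ.cfg i) (e v) x).mpr
          (by rwa [Equiv.symm_apply_apply]))
  step_reconf := by
    intro i hi h
    have h' := ρ.step_reconf i hi h
    show (ρ.cfg (i + 1)).label ∘ e.symm = (ρ.cfg i).label ∘ e.symm
    rw [h']
  alternate := ρ.alternate

/-! #### Completeness: abstractly reachable states are coverable by 1-constrained executions -/

lemma extend_rcv {X : Type} {q q' p p' : Q} {a : M} (hqt : P.trans q (BAct.rcv a) q')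
    (hbt : P.trans p (BAct.brd a) p') {R : ℕ} (σ : Execution X P R)
    (u' w' w1' : X) (huw : u' ≠ w') (huw1 : u' ≠ w1') (hww1 : w' ≠ w1')
    (hI : σ.Initial) (hd : ∀ i < R, dist (σ.cfg i) (σ.cfg (i + 1)) ≤ 1)
    (hend : R = 0 ∨ σ.ty (R - 1) = StepType.comm)
    (hstart : R = 0 ∨ σ.ty 0 = StepType.reconf)
    (h0 : (σ.cfg 0).graph = ⊥) (he : (σ.cfg R).graph = ⊥)
    (hLu : (σ.cfg R).label u' = q) (hLw : (σ.cfg R).label w' = p)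
    (hLw1 : (σ.cfg R).label w1' = p) :
    ∃ ρ : Execution X P (R + 2 + 2),
      ρ.Initial ∧ (∀ i < R + 2 + 2, dist (ρ.cfg i) (ρ.cfg (i + 1)) ≤ 1) ∧
      ρ.ty (R + 2 + 2 - 1) = StepType.comm ∧ ρ.ty 0 = StepType.reconf ∧
      (ρ.cfg 0).graph = ⊥ ∧ (ρ.cfg (R + 2 + 2)).graph = ⊥ ∧
      (ρ.cfg (R + 2 + 2)).label u' = q' := by
  classical
  set L := (σ.cfg R).label with hLdef
  set G1 : Config X Q := ⟨SimpleGraph.fromEdgeSet {s(u', w')}, L⟩ with hG1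
  have h1 : ReconfStep (σ.cfg R) G1 := rfl
  set L2 := Function.update (Function.update L u' q') w' p' with hL2def
  set G2 : Config X Q := ⟨G1.graph, L2⟩ with hG2
  have hL2u : L2 u' = q' := by
    rw [hL2def, Function.update_of_ne huw, Function.update_self]
  have hL2w : L2 w' = p' := by
    rw [hL2def, Function.update_self]
  have hL2w1 : L2 w1' = p := by
    rw [hL2def, Function.update_of_ne (Ne.symm hww1), Function.update_of_ne (Ne.symm huw1)]
    exact hLw1
  have h2 : CommStep P G1 G2 := by
    refine ⟨rfl, w', a, ?_, ?_, ?_⟩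
    · show P.trans (L w') _ (L2 w')
      rw [hLw, hL2w]
      exact hbt
    · intro x hadj
      rcases (single_adj huw).1 hadj with ⟨h1', _⟩ | ⟨_, hxu⟩
      · exact absurd h1'.symm huw
      · rw [hxu]
        show P.trans (L u') _ (L2 u')
        rw [hLu, hL2u]
        exact hqt
    · intro x hxw hnadj
      have hxu : x ≠ u' := by
        rintro rfl
        exact hnadj ((single_adj huw).2 (Or.inr ⟨rfl, rfl⟩))
      show L2 x = L x
      rw [hL2def, Function.update_of_ne hxw, Function.update_of_ne hxu]
  have hendR : R + 2 = 0 ∨ (σ.snoc2 G1 G2 h1 h2 hend).ty (R + 2 - 1) = StepType.comm :=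
    Or.inr Execution.snoc2_ty_succ
  set G3 : Config X Q := ⟨⊥, L2⟩ with hG3
  have h3 : ReconfStep ((σ.snoc2 G1 G2 h1 h2 hend).cfg (R + 2)) G3 := by
    show G3.label = ((σ.snoc2 G1 G2 h1 h2 hend).cfg (R + 2)).label
    rw [Execution.snoc2_cfg_top]
  set L4 := Function.update L2 w1' p' with hL4def
  set G4 : Config X Q := ⟨⊥, L4⟩ with hG4
  have h4 : CommStep P G3 G4 := by
    refine ⟨rfl, w1', a, ?_, ?_, ?_⟩
    · show P.trans (L2 w1') _ (L4 w1')
      rw [hL2w1, hL4def, Function.update_self]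
      exact hbt
    · intro x hadj
      exact absurd hadj (by simp [hG3])
    · intro x hx _
      exact Function.update_of_ne hx _ _
  refine ⟨(σ.snoc2 G1 G2 h1 h2 hend).snoc2 G3 G4 h3 h4 hendR, ?_, ?_, ?_, ?_, ?_, ?_, ?_⟩
  · intro x
    rw [Execution.snoc2_cfg_le (by omega : 0 ≤ R + 2),
      Execution.snoc2_cfg_le (by omega : 0 ≤ R)]
    exact hI x
  · intro i hi
    rcases lt_trichotomy i R with hcase | hcase | hcase
    · rw [Execution.snoc2_cfg_le (by omega : i ≤ R + 2),
        Execution.snoc2_cfg_le (by omega : i + 1 ≤ R + 2),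
        Execution.snoc2_cfg_le (by omega : i ≤ R),
        Execution.snoc2_cfg_le (by omega : i + 1 ≤ R)]
      exact hd i hcase
    · subst hcase
      rw [Execution.snoc2_cfg_le (by omega : i ≤ i + 2),
        Execution.snoc2_cfg_le (by omega : i + 1 ≤ i + 2),
        Execution.snoc2_cfg_le (by omega : i ≤ i), Execution.snoc2_cfg_succ]
      exact dist_bot_single huw he rfl
    · rcases (by omega : i = R + 1 ∨ i = R + 2 ∨ i = R + 3) with h' | h' | h'
      · subst h'
        simp only [show R + 1 + 1 = R + 2 from by omega]
        rw [Execution.snoc2_cfg_le (by omega : R + 1 ≤ R + 2),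
          Execution.snoc2_cfg_le (by omega : R + 2 ≤ R + 2),
          Execution.snoc2_cfg_succ, Execution.snoc2_cfg_top]
        exact le_trans (Nat.le_of_eq (dist_of_graph_eq rfl)) (Nat.zero_le 1)
      · subst h'
        rw [Execution.snoc2_cfg_le (by omega : R + 2 ≤ R + 2),
          Execution.snoc2_cfg_succ (ρ := σ.snoc2 G1 G2 h1 h2 hend) (G1 := G3)
            (G2 := G4) (h1 := h3) (h2 := h4) (hend := hendR),
          Execution.snoc2_cfg_top]
        rw [dist_comm]
        exact dist_bot_single huw rfl rfl
      · subst h'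
        simp only [show R + 3 = R + 2 + 1 from by omega,
          show R + 2 + 1 + 1 = R + 2 + 2 from by omega]
        rw [Execution.snoc2_cfg_succ, Execution.snoc2_cfg_top]
        exact le_trans (Nat.le_of_eq (dist_of_graph_eq rfl)) (Nat.zero_le 1)
  · simp only [show R + 2 + 2 - 1 = R + 2 + 1 from by omega]
    exact Execution.snoc2_ty_succ
  · by_cases hR0 : R = 0
    · rw [Execution.snoc2_ty_lt (by omega : 0 < R + 2)]
      have h' := Execution.snoc2_ty_r (ρ := σ) (G1 := G1) (G2 := G2)
        (h1 := h1) (h2 := h2) (hend := hend)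
      rw [← hR0]
      exact h'
    · rcases hstart with h0' | hstart
      · exact absurd h0' hR0
      · rw [Execution.snoc2_ty_lt (by omega : 0 < R + 2),
          Execution.snoc2_ty_lt (by omega : 0 < R)]
        exact hstart
  · rw [Execution.snoc2_cfg_le (by omega : 0 ≤ R + 2),
      Execution.snoc2_cfg_le (by omega : 0 ≤ R)]
    exact h0
  · rw [Execution.snoc2_cfg_top]
  · rw [Execution.snoc2_cfg_top]
    show L4 u' = q'
    rw [hL4def, Function.update_of_ne huw1]
    exact hL2u

theorem reach_cover {s : Q} (h : Reach P s) :
    ∃ (V : Type) (_ : Finite V) (r : ℕ) (ρ : Execution V P r) (v : V),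
      ρ.Initial ∧ (∀ i < r, dist (ρ.cfg i) (ρ.cfg (i + 1)) ≤ 1) ∧
      (r = 0 ∨ ρ.ty (r - 1) = StepType.comm) ∧ (r = 0 ∨ ρ.ty 0 = StepType.reconf) ∧
      (ρ.cfg 0).graph = ⊥ ∧ (ρ.cfg r).graph = ⊥ ∧ (ρ.cfg r).label v = s := by
  classical
  induction h with
  | init q hq =>
    refine ⟨Unit, inferInstance, 0,
      ⟨fun _ => ⟨⊥, fun _ => q⟩, fun _ => .comm,
        fun i hi => absurd hi (Nat.not_lt_zero i),
        fun i hi => absurd hi (Nat.not_lt_zero i),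
        fun i hi => absurd hi (Nat.not_lt_zero (i + 1))⟩,
      (), fun _ => hq, fun i hi => absurd hi (Nat.not_lt_zero i),
      Or.inl rfl, Or.inl rfl, rfl, rfl, rfl⟩
  | brd p p' a hp hb IH =>
    obtain ⟨V, fV, r, ρ, v, hI, hd, hend, hstart, h0, hr, hlab⟩ := IH
    haveI := fV
    set G2 : Config V Q := ⟨(ρ.cfg r).graph, Function.update (ρ.cfg r).label v p'⟩ with hG2
    have h2 : CommStep P (ρ.cfg r) G2 := by
      refine ⟨rfl, v, a, ?_, ?_, ?_⟩
      · show P.trans ((ρ.cfg r).label v) _ (Function.update (ρ.cfg r).label v p' v)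
        rw [Function.update_self, hlab]
        exact hb
      · intro x hadj
        rw [hr] at hadj
        exact absurd hadj (by simp)
      · intro x hne _
        exact Function.update_of_ne hne _ _
    have h1 : ReconfStep (ρ.cfg r) (ρ.cfg r) := rfl
    refine ⟨V, fV, r + 2, ρ.snoc2 (ρ.cfg r) G2 h1 h2 hend, v, ?_, ?_, ?_, ?_, ?_, ?_, ?_⟩
    · intro x
      rw [Execution.snoc2_cfg_le (by omega : 0 ≤ r)]
      exact hI x
    · intro i hi
      rcases lt_trichotomy i r with hcase | hcase | hcase
      · rw [Execution.snoc2_cfg_le (by omega : i ≤ r),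
          Execution.snoc2_cfg_le (by omega : i + 1 ≤ r)]
        exact hd i hcase
      · subst hcase
        rw [Execution.snoc2_cfg_le (le_refl i), Execution.snoc2_cfg_succ]
        exact le_trans (Nat.le_of_eq (dist_of_graph_eq rfl)) (Nat.zero_le 1)
      · have hi' : i = r + 1 := by omega
        subst hi'
        rw [Execution.snoc2_cfg_succ, Execution.snoc2_cfg_top]
        exact le_trans (Nat.le_of_eq (dist_of_graph_eq rfl)) (Nat.zero_le 1)
    · exact Or.inr Execution.snoc2_ty_succ
    · refine Or.inr ?_
      by_cases hr0 : r = 0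
      · subst hr0
        exact Execution.snoc2_ty_r
      · rcases hstart with h0' | hstart
        · exact absurd h0' hr0
        · rw [Execution.snoc2_ty_lt (by omega : 0 < r)]
          exact hstart
    · rw [Execution.snoc2_cfg_le (by omega : 0 ≤ r)]
      exact h0
    · rw [Execution.snoc2_cfg_top]
      exact hr
    · rw [Execution.snoc2_cfg_top]
      exact Function.update_self v p' (ρ.cfg r).label
  | rcv q q' p p' a hq' hqt hp' hbt IHq IHp =>
    obtain ⟨V1, f1, r1, ρ1, u, hI1, hd1, hend1, hstart1, h01, he1, hlab1⟩ := IHq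
    obtain ⟨V2, f2, r2, ρ2, w, hI2, hd2, hend2, hstart2, h02, he2, hlab2⟩ := IHp
    haveI := f1
    haveI := f2
    obtain ⟨hIσ1, hdσ1, hendσ1, hstartσ1, h0σ1, heσ1, hlabσ1⟩ :=
      juxtE_props ρ1 ρ2 hend1 hstart2 hend2 hstart1 hI1 hI2 hd1 hd2 h01 he1 h02 he2
    obtain ⟨hIσ, hdσ, hendσ, hstartσ, h0σ, heσ, hlabσ⟩ :=
      juxtE_props (ρ1.juxtE ρ2 hend1 hstart2) ρ2 hendσ1 hstart2 hend2 hstartσ1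
        hIσ1 hI2 hdσ1 hd2 h0σ1 heσ1 h02 he2
    have hLu : (((ρ1.juxtE ρ2 hend1 hstart2).juxtE ρ2 hendσ1 hstart2).cfg
        (r1 + r2 + r2)).label (Sum.inl (Sum.inl u)) = q := by
      rw [hlabσ]
      show ((ρ1.juxtE ρ2 hend1 hstart2).cfg (r1 + r2)).label (Sum.inl u) = q
      rw [hlabσ1]
      exact hlab1
    have hLw : (((ρ1.juxtE ρ2 hend1 hstart2).juxtE ρ2 hendσ1 hstart2).cfg
        (r1 + r2 + r2)).label (Sum.inl (Sum.inr w)) = p := by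
      rw [hlabσ]
      show ((ρ1.juxtE ρ2 hend1 hstart2).cfg (r1 + r2)).label (Sum.inr w) = p
      rw [hlabσ1]
      exact hlab2
    have hLw1 : (((ρ1.juxtE ρ2 hend1 hstart2).juxtE ρ2 hendσ1 hstart2).cfg
        (r1 + r2 + r2)).label (Sum.inr w) = p := by
      rw [hlabσ]
      exact hlab2
    have hne1 : (Sum.inl (Sum.inl u) : (V1 ⊕ V2) ⊕ V2) ≠ Sum.inl (Sum.inr w) := by simp
    have hne2 : (Sum.inl (Sum.inl u) : (V1 ⊕ V2) ⊕ V2) ≠ Sum.inr w := by simp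
    have hne3 : (Sum.inl (Sum.inr w) : (V1 ⊕ V2) ⊕ V2) ≠ Sum.inr w := by simp
    obtain ⟨ρ', hI', hd', hend', hstart', h0', he', hlab'⟩ :=
      extend_rcv hqt hbt ((ρ1.juxtE ρ2 hend1 hstart2).juxtE ρ2 hendσ1 hstart2)
        (Sum.inl (Sum.inl u)) (Sum.inl (Sum.inr w)) (Sum.inr w) hne1 hne2 hne3
        hIσ hdσ hendσ hstartσ h0σ heσ hLu hLw hLw1
    exact ⟨(V1 ⊕ V2) ⊕ V2, inferInstance, r1 + r2 + r2 + 2 + 2, ρ', Sum.inl (Sum.inl u),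
      hI', hd', Or.inr hend', Or.inr hstart', h0', he', hlab'⟩

end Aux

/-- Remark: coverability is insensitive to `k`-constrained
reconfigurations.
For `k ≥ 1`, there exists a `k`-constrained initial execution visiting a configuration
in which some node is labelled by a state of `F` if, and only if, there exists an
unconstrained initial execution visiting such a configuration. -/
theorem kConstrained_coverability_iff_unconstrained {Q M : Type} [Finite Q] [Finite M]
    (P : BroadcastProtocol Q M) (F : Set Q) (k : ℕ) (hk : 1 ≤ k) :
    (∃ (n r : ℕ) (ρ : Execution (Fin n) P r),
        ρ.Initial ∧ ρ.KConstrained k ∧ ∃ i ≤ r, ∃ v, (ρ.cfg i).label v ∈ F) ↔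
    (∃ (n r : ℕ) (ρ : Execution (Fin n) P r),
        ρ.Initial ∧ ∃ i ≤ r, ∃ v, (ρ.cfg i).label v ∈ F) := by
  constructor
  · rintro ⟨n, r, ρ, hI, _, hcov⟩
    exact ⟨n, r, ρ, hI, hcov⟩
  · rintro ⟨n, r, ρ, hI, i, hi, v, hvF⟩
    have hre : Reach P ((ρ.cfg i).label v) := reach_of_exec ρ hI i hi v
    obtain ⟨V, fV, r', ρ', u, hI', hd', _, _, _, _, hlab⟩ := reach_cover hre
    haveI := fV
    haveI := Fintype.ofFinite V
    refine ⟨Fintype.card V, r', ρ'.renameE (Fintype.equivFin V),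
      fun x => hI' ((Fintype.equivFin V).symm x), ?_, r', le_refl _,
      Fintype.equivFin V u, ?_⟩
    · intro j hj _
      calc dist ((ρ'.renameE (Fintype.equivFin V)).cfg j)
            ((ρ'.renameE (Fintype.equivFin V)).cfg (j + 1))
          = dist (ρ'.cfg j) (ρ'.cfg (j + 1)) := dist_mapEquiv _ _ _
        _ ≤ 1 := hd' j hj
        _ ≤ k := hk
    · show (ρ'.cfg r').label ((Fintype.equivFin V).symm (Fintype.equivFin V u)) ∈ F
      rw [Equiv.symm_apply_apply, hlab]
      exact hvF

end RBN
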